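/- Let r ≥ 1, δ ≥ 1, t ≥ 1, k ≥ 1, set n = t(r + δ - 1), and let P_1, …, P_t be a partition of {1,…,n} into blocks each of size r + δ - 1. Suppose S ⊆ {1,…,n} contains no subset K of size k with |K ∩ P_i| ≤ r for all 1 ≤ i ≤ t. Then |S| ≤ k - 1 + (⌈k/r⌉ - 1)(δ - 1). -/

import Mathlib

/-- Ceiling division: `cdiv k r = ⌈k/r⌉` for `r ≥ 1`. -/
def cdiv (a b : ℕ) : ℕ := (a + b - 1) / b

/-- Let `n = t(r + δ - 1)` and let `P_1, …, P_t` be a partition of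
`{1, …, n}` into blocks of size `r + δ - 1`. If `S` contains no subset `K` of size `k` with
`|K ∩ P_i| ≤ r` for all `i`, then `|S| ≤ k - 1 + (⌈k/r⌉ - 1)(δ - 1)`. -/
theorem stmt_15 {n t r δ k : ℕ} (hr : 1 ≤ r) (hδ : 1 ≤ δ) (ht : 1 ≤ t) (hk : 1 ≤ k)
    (hn : n = t * (r + δ - 1))
    (P : Fin t → Finset (Fin n))
    (hdisj : ∀ i j, i ≠ j → Disjoint (P i) (P j))
    (hcover : Finset.univ.biUnion P = Finset.univ)
    (hcard : ∀ i, (P i).card = r + δ - 1)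
    (S : Finset (Fin n))
    (hS : ∀ K ⊆ S, K.card = k → ∃ i, r < (K ∩ P i).card) :
    S.card ≤ k - 1 + (cdiv k r - 1) * (δ - 1) := by
  classical
  set f : Fin t → ℕ := fun i => (S ∩ P i).card with hf
  have hScard : S.card = ∑ i, f i := by
    have hSeq : S = Finset.univ.biUnion (fun i => S ∩ P i) := by
      ext x
      simp only [Finset.mem_biUnion, Finset.mem_inter, Finset.mem_univ, true_and]
      constructor
      · intro hx
        have hx2 : x ∈ Finset.univ.biUnion P := by rw [hcover]; exact Finset.mem_univ x
        obtain ⟨i, _, hi⟩ := Finset.mem_biUnion.1 hx2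
        exact ⟨i, hx, hi⟩
      · rintro ⟨i, hx, _⟩; exact hx
    rw [hSeq, Finset.card_biUnion]
    intro i _ j _ hij
    exact (hdisj i j hij).mono Finset.inter_subset_right Finset.inter_subset_right
  have hmin : ∑ i, min (f i) r ≤ k - 1 := by
    by_contra h
    push_neg at h
    have hk' : k ≤ ∑ i, min (f i) r := by omega
    have hA : ∀ i : Fin t, ∃ A ⊆ S ∩ P i, A.card = min (f i) r :=
      fun i => Finset.exists_subset_card_eq (min_le_left _ _)
    choose A hA1 hA2 using hA
    have hAcard : (Finset.univ.biUnion A).card = ∑ i, min (f i) r := by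
      rw [Finset.card_biUnion]
      · exact Finset.sum_congr rfl fun i _ => hA2 i
      · intro i _ j _ hij
        exact (hdisj i j hij).mono ((hA1 i).trans Finset.inter_subset_right)
          ((hA1 j).trans Finset.inter_subset_right)
    obtain ⟨K, hK1, hK2⟩ := Finset.exists_subset_card_eq (show k ≤ (Finset.univ.biUnion A).card by rw [hAcard]; exact hk')
    have hKS : K ⊆ S := by
      intro x hx
      obtain ⟨i, _, hi⟩ := Finset.mem_biUnion.1 (hK1 hx)
      exact Finset.inter_subset_left (hA1 i hi)
    obtain ⟨i, hi⟩ := hS K hKS hK2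
    have hsub : K ∩ P i ⊆ A i := by
      intro x hx
      rw [Finset.mem_inter] at hx
      obtain ⟨j, _, hj⟩ := Finset.mem_biUnion.1 (hK1 hx.1)
      rcases eq_or_ne j i with rfl | hne
      · exact hj
      · exact absurd hx.2 (Finset.disjoint_left.1 (hdisj j i hne)
          (Finset.mem_inter.1 (hA1 j hj)).2)
    have : (K ∩ P i).card ≤ r := by
      calc (K ∩ P i).card ≤ (A i).card := Finset.card_le_card hsub
        _ = min (f i) r := hA2 i
        _ ≤ r := min_le_right _ _
    omega
  have hfle : ∀ i, f i ≤ r + δ - 1 := fun i =>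
    le_trans (Finset.card_le_card Finset.inter_subset_right) (le_of_eq (hcard i))
  set T := Finset.univ.filter (fun i => r < f i) with hT
  have hexcess : ∑ i, (f i - min (f i) r) ≤ T.card * (δ - 1) := by
    have h1 : ∑ i, (f i - min (f i) r) = ∑ i ∈ T, (f i - min (f i) r) := by
      refine (Finset.sum_subset (Finset.subset_univ T) ?_).symm
      intro i _ hi
      simp only [hT, Finset.mem_filter, Finset.mem_univ, true_and, not_lt] at hi
      omega
    rw [h1]
    calc ∑ i ∈ T, (f i - min (f i) r) ≤ ∑ i ∈ T, (δ - 1) :=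
          Finset.sum_le_sum (fun i _ => by have := hfle i; omega)
      _ = T.card * (δ - 1) := by rw [Finset.sum_const, smul_eq_mul]
  have hTcard : T.card * r ≤ k - 1 := by
    calc T.card * r = ∑ i ∈ T, r := by rw [Finset.sum_const, smul_eq_mul]
      _ = ∑ i ∈ T, min (f i) r := by
          refine Finset.sum_congr rfl fun i hi => ?_
          simp only [hT, Finset.mem_filter, Finset.mem_univ, true_and] at hi
          omega
      _ ≤ ∑ i, min (f i) r := Finset.sum_le_sum_of_subset (Finset.subset_univ T)
      _ ≤ k - 1 := hmin
  have hcdiv : cdiv k r - 1 = (k - 1) / r := by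
    have h2 : k + r - 1 = (k - 1) + r := by omega
    simp only [cdiv, h2, Nat.add_div_right _ (show 0 < r by omega), Nat.add_sub_cancel]
  have hTle : T.card ≤ cdiv k r - 1 := by
    rw [hcdiv]
    exact (Nat.le_div_iff_mul_le (by omega)).2 hTcard
  calc S.card = ∑ i, f i := hScard
    _ = ∑ i, min (f i) r + ∑ i, (f i - min (f i) r) := by
        rw [← Finset.sum_add_distrib]
        exact Finset.sum_congr rfl fun i _ => by omega
    _ ≤ (k - 1) + T.card * (δ - 1) := Nat.add_le_add hmin hexcess
    _ ≤ k - 1 + (cdiv k r - 1) * (δ - 1) :=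
        Nat.add_le_add_left (Nat.mul_le_mul_right _ hTle) _
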